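/- Let h > 0, γ > 0, and k a positive integer. Suppose g : [0,h] → ℝ is k times continuously differentiable with g^(j)(0) = 0 for all 0 ≤ j ≤ k. Define w(x) := g(x) x^(γ-1) for 0 < x ≤ h and w(0) := 0. Then w is (k-1) times continuously differentiable on [0,h], and there is a constant C depending only on h, k, γ such that the C^{k-1}[0,h] norm of w is at most C times the sup norm of g^(k) on [0,h]. -/

import Mathlib

open Real Finset Topology Filter Set

noncomputable def cc (γ : ℝ) : ℕ → ℕ → ℝ
  | 0, 0 => 1
  | 0, _+1 => 0
  | m+1, 0 => cc γ m 0 * (γ - 1 - m)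
  | m+1, i+1 => cc γ m i + cc γ m (i+1) * (γ - 1 - m + i + 1)

lemma cc_eq_zero (γ : ℝ) : ∀ m i, m < i → cc γ m i = 0 := by
  intro m
  induction m with
  | zero => intro i hi; match i, hi with | (j+1), _ => rfl
  | succ m IH =>
    intro i hi
    match i, hi with
    | (j+1), hi =>
      have h1 : cc γ m j = 0 := IH j (by omega)
      have h2 : cc γ m (j+1) = 0 := IH (j+1) (by omega)
      show cc γ m j + cc γ m (j+1) * (γ - 1 - m + j + 1) = 0
      rw [h1, h2]; ring

noncomputable def AA (γ : ℝ) (m : ℕ) : ℝ := ∑ i ∈ Finset.range (m+1), |cc γ m i|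

lemma AA_nonneg (γ : ℝ) (m : ℕ) : 0 ≤ AA γ m :=
  Finset.sum_nonneg fun _ _ => abs_nonneg _

lemma cc_key (γ : ℝ) (m : ℕ) (x : ℝ) (d : ℕ → ℝ) :
    ∑ i ∈ Finset.range (m+1),
      cc γ m i * (d (i+1) * x ^ (γ - 1 - (m:ℝ) + i)
        + d i * ((γ - 1 - (m:ℝ) + i) * x ^ (γ - 1 - (m:ℝ) + i - 1)))
    = ∑ i ∈ Finset.range (m+1+1), cc γ (m+1) i * d i * x ^ (γ - 1 - ((m+1:ℕ):ℝ) + i) := by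
  have hQ : ∀ i : ℕ, (γ - 1 - ((m+1:ℕ):ℝ) + i) = γ - 1 - (m:ℝ) + i - 1 := by
    intro i; push_cast; ring
  set P : ℕ → ℝ := fun i => x ^ (γ - 1 - (m:ℝ) + i) with hP
  set Q : ℕ → ℝ := fun i => x ^ (γ - 1 - (m:ℝ) + i - 1) with hQdef
  have hQP : ∀ i : ℕ, Q (i+1) = P i := by
    intro i
    show x ^ (γ - 1 - (m:ℝ) + (i+1:ℕ) - 1) = x ^ (γ - 1 - (m:ℝ) + i)
    congr 1; push_cast; ring
  have hRHS : ∑ i ∈ Finset.range (m+1+1), cc γ (m+1) i * d i * x ^ (γ - 1 - ((m+1:ℕ):ℝ) + i)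
      = ∑ i ∈ Finset.range (m+1+1), cc γ (m+1) i * d i * Q i := by
    refine Finset.sum_congr rfl fun i _ => ?_
    rw [hQdef]; rw [hQ i]
  -- G is the "second part" summand
  set G : ℕ → ℝ := fun i => cc γ m i * ((γ - 1 - (m:ℝ) + i) * (d i * Q i)) with hG
  have hGsum : ∑ i ∈ Finset.range (m+1), G i
      = (∑ i ∈ Finset.range (m+1), G (i+1)) + G 0 := by
    have h1 : ∑ i ∈ Finset.range (m+1+1), G i = ∑ i ∈ Finset.range (m+1), G i + G (m+1) :=
      Finset.sum_range_succ G (m+1)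
    have h2 : ∑ i ∈ Finset.range (m+1+1), G i
        = (∑ i ∈ Finset.range (m+1), G (i+1)) + G 0 := Finset.sum_range_succ' G (m+1)
    have h3 : G (m+1) = 0 := by
      rw [hG]; simp only [cc_eq_zero γ m (m+1) (Nat.lt_succ_self m)]; ring
    rw [h3, add_zero] at h1
    rw [← h1, h2]
  rw [hRHS, Finset.sum_range_succ' (fun i => cc γ (m+1) i * d i * Q i) (m+1)]
  have hLHS : ∑ i ∈ Finset.range (m+1),
      cc γ m i * (d (i+1) * x ^ (γ - 1 - (m:ℝ) + i)
        + d i * ((γ - 1 - (m:ℝ) + i) * x ^ (γ - 1 - (m:ℝ) + i - 1)))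
      = (∑ i ∈ Finset.range (m+1), cc γ m i * (d (i+1) * P i)) + ∑ i ∈ Finset.range (m+1), G i := by
    rw [← Finset.sum_add_distrib]
    refine Finset.sum_congr rfl fun i _ => ?_
    rw [hG, hP, hQdef]; ring
  rw [hLHS, hGsum]
  have hstep : ∀ i : ℕ, cc γ (m+1) (i+1) * d (i+1) * Q (i+1)
      = cc γ m i * (d (i+1) * P i) + G (i+1) := by
    intro i
    show (cc γ m i + cc γ m (i+1) * (γ - 1 - m + i + 1)) * d (i+1) * Q (i+1)
        = cc γ m i * (d (i+1) * P i)
          + cc γ m (i+1) * ((γ - 1 - (m:ℝ) + ((i+1:ℕ):ℝ)) * (d (i+1) * Q (i+1)))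
    rw [hQP i]
    push_cast
    ring
  have hzero : cc γ (m+1) 0 * d 0 * Q 0 = G 0 := by
    show (cc γ m 0 * (γ - 1 - m)) * d 0 * Q 0
        = cc γ m 0 * ((γ - 1 - (m:ℝ) + ((0:ℕ):ℝ)) * (d 0 * Q 0))
    push_cast
    ring
  rw [Finset.sum_congr rfl fun i _ => hstep i, hzero, Finset.sum_add_distrib]
  ring

theorem stmt4 (h γ : ℝ) (k : ℕ) (hh : 0 < h) (hγ : 0 < γ) (hk : 1 ≤ k) :
    ∃ C > 0, ∀ (g : ℝ → ℝ) (M : ℝ),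
      ContDiffOn ℝ k g (Set.Icc 0 h) →
      (∀ j ≤ k, iteratedDerivWithin j g (Set.Icc 0 h) 0 = 0) →
      (∀ x ∈ Set.Icc (0 : ℝ) h, |iteratedDerivWithin k g (Set.Icc 0 h) x| ≤ M) →
      ContDiffOn ℝ (k - 1) (fun x : ℝ => g x * x ^ (γ - 1)) (Set.Icc 0 h) ∧
      ∀ j ≤ k - 1, ∀ x ∈ Set.Icc (0 : ℝ) h,
        |iteratedDerivWithin j (fun x : ℝ => g x * x ^ (γ - 1)) (Set.Icc 0 h) x| ≤ C * M := by
  have hs : UniqueDiffOn ℝ (Set.Icc (0:ℝ) h) := uniqueDiffOn_Icc hh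
  set S : ℝ := ∑ m ∈ Finset.range k, AA γ m + 1 with hS
  have hS1 : 1 ≤ S := by
    rw [hS]
    nlinarith [Finset.sum_nonneg (fun m (_ : m ∈ Finset.range k) => AA_nonneg γ m)]
  set C : ℝ := S * (1+h) ^ (γ + (k:ℝ)) with hC
  have hP0 : (0:ℝ) < (1+h) ^ (γ + (k:ℝ)) := rpow_pos_of_pos (by linarith) _
  refine ⟨C, by positivity, ?_⟩
  intro g M hg h0 hM
  have hM0 : (0:ℝ) ≤ M := (abs_nonneg _).trans (hM 0 ⟨le_refl 0, hh.le⟩)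
  set D : ℕ → ℝ → ℝ := fun i => iteratedDerivWithin i g (Set.Icc 0 h) with hDdef
  -- derivative of D i within Icc
  have hD : ∀ i, i < k → ∀ x ∈ Set.Icc (0:ℝ) h,
      HasDerivWithinAt (D i) (D (i+1) x) (Set.Icc 0 h) x := by
    intro i hi x hx
    have h1 : DifferentiableWithinAt ℝ (D i) (Set.Icc 0 h) x :=
      (hg.differentiableOn_iteratedDerivWithin (by exact_mod_cast hi) hs) x hx
    have h2 := h1.hasDerivWithinAt
    rwa [← iteratedDerivWithin_succ] at h2
  -- Taylor-type bound
  have hT : ∀ n i, i + n = k → ∀ x ∈ Set.Icc (0:ℝ) h, |D i x| ≤ M * x ^ n := by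
    intro n
    induction n with
    | zero =>
      intro i hi x hx
      have : i = k := by omega
      subst this
      simpa using hM x hx
    | succ n IH =>
      intro i hi x hx
      have hiK : i < k := by omega
      have hcontD : ContinuousOn (D i) (Set.Icc 0 h) :=
        hg.continuousOn_iteratedDerivWithin (by exact_mod_cast hiK.le) hs
      have hfd : ∀ y ∈ Set.Ico (0:ℝ) h, HasDerivWithinAt (D i) (D (i+1) y) (Set.Ici y) y := by
        intro y hy
        exact (hD i hiK y ⟨hy.1, hy.2.le⟩).mono_of_mem_nhdsWithin (Icc_mem_nhdsGE_of_mem hy)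
      have hB : ∀ y : ℝ, HasDerivAt (fun z : ℝ => M * z ^ (n+1)) (M * ((n+1 : ℕ) * y ^ n)) y := by
        intro y
        have := (hasDerivAt_pow (n+1) y).const_mul M
        simpa using this
      have hbound : ∀ y ∈ Set.Ico (0:ℝ) h, ‖D (i+1) y‖ ≤ M * ((n+1 : ℕ) * y ^ n) := by
        intro y hy
        have h1 := IH (i+1) (by omega) y ⟨hy.1, hy.2.le⟩
        rw [Real.norm_eq_abs]
        have hyn : (0:ℝ) ≤ y ^ n := pow_nonneg hy.1 n
        have hMy : (0:ℝ) ≤ M * y ^ n := mul_nonneg hM0 hyn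
        push_cast
        nlinarith
      have h00 : ‖D i 0‖ ≤ M * (0:ℝ) ^ (n+1) := by
        rw [hDdef]
        simp only [Real.norm_eq_abs]
        rw [h0 i hiK.le]
        simp
      have := image_norm_le_of_norm_deriv_right_le_deriv_boundary hcontD hfd h00 hB hbound hx
      simpa [Real.norm_eq_abs] using this
  set F : ℕ → ℝ → ℝ := fun m x => ∑ i ∈ Finset.range (m+1),
    cc γ m i * D i x * x ^ (γ - 1 - (m:ℝ) + (i:ℝ)) with hFdef
  have hF0 : ∀ m, m ≤ k → F m 0 = 0 := by
    intro m hm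
    rw [hFdef]
    refine Finset.sum_eq_zero fun i hi => ?_
    have : D i 0 = 0 := h0 i (by simp at hi; omega)
    rw [this]; ring
  have hFb : ∀ m, m ≤ k → ∀ x ∈ Set.Icc (0:ℝ) h,
      |F m x| ≤ AA γ m * M * x ^ (γ - 1 - (m:ℝ) + (k:ℝ)) := by
    intro m hm x hx
    rcases eq_or_lt_of_le hx.1 with hx0 | hx0
    · rw [← hx0, hF0 m hm]
      simp only [abs_zero]
      have := AA_nonneg γ m
      positivity
    · rw [hFdef]
      refine le_trans (Finset.abs_sum_le_sum_abs _ _) ?_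
      have hterm : ∀ i ∈ Finset.range (m+1),
          |cc γ m i * D i x * x ^ (γ - 1 - (m:ℝ) + (i:ℝ))|
            ≤ |cc γ m i| * (M * x ^ (γ - 1 - (m:ℝ) + (k:ℝ))) := by
        intro i hi
        have hik : i ≤ k := by
          have := Finset.mem_range.mp hi; omega
        have hDb := hT (k - i) i (by omega) x hx
        have hnp : (x:ℝ) ^ ((k:ℝ) - (i:ℝ)) = x ^ (k - i : ℕ) := by
          rw [← Nat.cast_sub hik, Real.rpow_natCast]
        rw [abs_mul, abs_mul]
        have hrp : |x ^ (γ - 1 - (m:ℝ) + (i:ℝ))| = x ^ (γ - 1 - (m:ℝ) + (i:ℝ)) :=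
          abs_of_nonneg (Real.rpow_nonneg hx0.le _)
        rw [hrp]
        have key : |D i x| * x ^ (γ - 1 - (m:ℝ) + (i:ℝ)) ≤ M * x ^ (γ - 1 - (m:ℝ) + (k:ℝ)) := by
          have h1 : |D i x| * x ^ (γ - 1 - (m:ℝ) + (i:ℝ))
              ≤ (M * x ^ ((k:ℝ) - (i:ℝ))) * x ^ (γ - 1 - (m:ℝ) + (i:ℝ)) := by
            apply mul_le_mul_of_nonneg_right _ (Real.rpow_nonneg hx0.le _)
            rw [hnp]; exact hDb
          have h2 : x ^ ((k:ℝ) - (i:ℝ)) * x ^ (γ - 1 - (m:ℝ) + (i:ℝ))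
              = x ^ (γ - 1 - (m:ℝ) + (k:ℝ)) := by
            rw [← Real.rpow_add hx0]
            congr 1; ring
          rw [mul_assoc, h2] at h1
          exact h1
        calc |cc γ m i| * |D i x| * x ^ (γ - 1 - (m:ℝ) + (i:ℝ))
            = |cc γ m i| * (|D i x| * x ^ (γ - 1 - (m:ℝ) + (i:ℝ))) := by ring
          _ ≤ |cc γ m i| * (M * x ^ (γ - 1 - (m:ℝ) + (k:ℝ))) :=
              mul_le_mul_of_nonneg_left key (abs_nonneg _)
      refine le_trans (Finset.sum_le_sum hterm) ?_
      rw [← Finset.sum_mul]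
      apply le_of_eq
      rw [AA]; ring
  have hder : ∀ m, m ≤ k - 1 → ∀ x ∈ Set.Icc (0:ℝ) h, 0 < x →
      HasDerivWithinAt (F m) (F (m+1) x) (Set.Icc 0 h) x := by
    intro m hm x hx hx0
    have hterm : ∀ i ∈ Finset.range (m+1),
        HasDerivWithinAt (fun y => cc γ m i * D i y * y ^ (γ - 1 - (m:ℝ) + (i:ℝ)))
          (cc γ m i * (D (i+1) x * x ^ (γ - 1 - (m:ℝ) + (i:ℝ))
            + D i x * ((γ - 1 - (m:ℝ) + (i:ℝ)) * x ^ (γ - 1 - (m:ℝ) + (i:ℝ) - 1))))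
          (Set.Icc 0 h) x := by
      intro i hi
      have hik : i < k := by
        have := Finset.mem_range.mp hi; omega
      have hu : HasDerivWithinAt (D i) (D (i+1) x) (Set.Icc 0 h) x := hD i hik x hx
      have hv : HasDerivWithinAt (fun y : ℝ => y ^ (γ - 1 - (m:ℝ) + (i:ℝ)))
          ((γ - 1 - (m:ℝ) + (i:ℝ)) * x ^ (γ - 1 - (m:ℝ) + (i:ℝ) - 1)) (Set.Icc 0 h) x :=
        (Real.hasDerivAt_rpow_const (Or.inl hx0.ne')).hasDerivWithinAt
      have hw := (hu.const_mul (cc γ m i)).mul hv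
      have h3 : cc γ m i * D (i+1) x * x ^ (γ - 1 - (m:ℝ) + (i:ℝ))
            + cc γ m i * D i x * ((γ - 1 - (m:ℝ) + (i:ℝ)) * x ^ (γ - 1 - (m:ℝ) + (i:ℝ) - 1))
          = cc γ m i * (D (i+1) x * x ^ (γ - 1 - (m:ℝ) + (i:ℝ))
            + D i x * ((γ - 1 - (m:ℝ) + (i:ℝ)) * x ^ (γ - 1 - (m:ℝ) + (i:ℝ) - 1))) := by
        ring
      rw [h3] at hw
      exact hw
    have hsum := HasDerivWithinAt.fun_sum hterm
    have hkey := cc_key γ m x (fun i => D i x)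
    rw [hkey] at hsum
    rw [hFdef]
    exact hsum
  have hder0 : ∀ m, m + 1 ≤ k - 1 → HasDerivWithinAt (F m) (F (m+1) 0) (Set.Icc 0 h) 0 := by
    intro m hm
    have hm2 : m + 2 ≤ k := by omega
    have hmk : m ≤ k := by omega
    have hF00 : F m 0 = 0 := hF0 m hmk
    have hFm10 : F (m+1) 0 = 0 := hF0 (m+1) (by omega)
    rw [hasDerivWithinAt_iff_tendsto_slope, hFm10]
    have hm2R : (m:ℝ) + 2 ≤ (k:ℝ) := by exact_mod_cast hm2
    have hepos : 0 < γ - 2 - (m:ℝ) + (k:ℝ) := by linarith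
    have hev : ∀ᶠ y in 𝓝[Set.Icc (0:ℝ) h \ {0}] 0,
        ‖slope (F m) 0 y‖ ≤ AA γ m * M * y ^ (γ - 2 - (m:ℝ) + (k:ℝ)) := by
      apply eventually_nhdsWithin_of_forall
      intro y hy
      have hy0 : 0 < y := lt_of_le_of_ne hy.1.1 (fun hc => hy.2 hc.symm)
      have hslope : slope (F m) 0 y = F m y / y := by
        rw [slope_def_field, hF00]
        simp
      rw [hslope, Real.norm_eq_abs, abs_div, abs_of_pos hy0]
      have hb := hFb m hmk y hy.1
      have h2 : y ^ (γ - 1 - (m:ℝ) + (k:ℝ)) / y = y ^ (γ - 2 - (m:ℝ) + (k:ℝ)) := by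
        rw [← Real.rpow_sub_one hy0.ne']
        congr 1; ring
      calc |F m y| / y ≤ AA γ m * M * y ^ (γ - 1 - (m:ℝ) + (k:ℝ)) / y := by gcongr
        _ = AA γ m * M * y ^ (γ - 2 - (m:ℝ) + (k:ℝ)) := by
            rw [mul_div_assoc, h2]
    have hlim : Filter.Tendsto (fun y : ℝ => AA γ m * M * y ^ (γ - 2 - (m:ℝ) + (k:ℝ)))
        (𝓝[Set.Icc (0:ℝ) h \ {0}] 0) (𝓝 0) := by
      have hc : Filter.Tendsto (fun y : ℝ => y ^ (γ - 2 - (m:ℝ) + (k:ℝ))) (𝓝 0) (𝓝 0) := by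
        have := (Real.continuousAt_rpow_const 0 (γ - 2 - (m:ℝ) + (k:ℝ)) (Or.inr hepos.le)).tendsto
        rwa [Real.zero_rpow hepos.ne'] at this
      have := hc.const_mul (AA γ m * M)
      rw [mul_zero] at this
      exact this.mono_left nhdsWithin_le_nhds
    exact squeeze_zero_norm' hev hlim
  have hderAll : ∀ m, m + 1 ≤ k - 1 → ∀ x ∈ Set.Icc (0:ℝ) h,
      HasDerivWithinAt (F m) (F (m+1) x) (Set.Icc 0 h) x := by
    intro m hm x hx
    rcases eq_or_lt_of_le hx.1 with h'|h'
    · rw [← h']; exact hder0 m hm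
    · exact hder m (by omega) x hx h'
  have hcont : ∀ m, m ≤ k - 1 → ContinuousOn (F m) (Set.Icc 0 h) := by
    intro m hm x hx
    have hmk : m ≤ k := by omega
    rcases eq_or_lt_of_le hx.1 with hx0 | hx0
    · rw [← hx0]
      have hmR : (m:ℝ) + 1 ≤ (k:ℝ) := by exact_mod_cast (by omega : m + 1 ≤ k)
      have hepos : 0 < γ - 1 - (m:ℝ) + (k:ℝ) := by linarith
      unfold ContinuousWithinAt
      rw [hF0 m hmk]
      have hev : ∀ᶠ y in 𝓝[Set.Icc (0:ℝ) h] 0,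
          ‖F m y‖ ≤ AA γ m * M * y ^ (γ - 1 - (m:ℝ) + (k:ℝ)) := by
        apply eventually_nhdsWithin_of_forall
        intro y hy
        rw [Real.norm_eq_abs]
        exact hFb m hmk y hy
      have hlim : Filter.Tendsto (fun y : ℝ => AA γ m * M * y ^ (γ - 1 - (m:ℝ) + (k:ℝ)))
          (𝓝[Set.Icc (0:ℝ) h] 0) (𝓝 0) := by
        have hc : Filter.Tendsto (fun y : ℝ => y ^ (γ - 1 - (m:ℝ) + (k:ℝ))) (𝓝 0) (𝓝 0) := by
          have := (Real.continuousAt_rpow_const 0 (γ - 1 - (m:ℝ) + (k:ℝ)) (Or.inr hepos.le)).tendsto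
          rwa [Real.zero_rpow hepos.ne'] at this
        have := hc.const_mul (AA γ m * M)
        rw [mul_zero] at this
        exact this.mono_left nhdsWithin_le_nhds
      exact squeeze_zero_norm' hev hlim
    · exact (hder m hm x hx hx0).continuousWithinAt
  have heq : ∀ m, m ≤ k - 1 → ∀ x ∈ Set.Icc (0:ℝ) h,
      iteratedDerivWithin m (fun x : ℝ => g x * x ^ (γ - 1)) (Set.Icc 0 h) x = F m x := by
    intro m
    induction m with
    | zero =>
      intro _ x hx
      simp only [iteratedDerivWithin_zero]
      have h2 : D 0 x = g x := by simp [hDdef]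
      rw [hFdef]
      simp only [zero_add, Finset.sum_range_one, Nat.cast_zero, h2]
      have h1 : cc γ 0 0 = 1 := rfl
      rw [h1]
      norm_num
    | succ m IH =>
      intro hm x hx
      have hm' : m ≤ k - 1 := by omega
      rw [iteratedDerivWithin_succ]
      have h1 : derivWithin (iteratedDerivWithin m (fun x : ℝ => g x * x ^ (γ - 1)) (Set.Icc 0 h))
          (Set.Icc 0 h) x = derivWithin (F m) (Set.Icc 0 h) x :=
        derivWithin_congr (fun y hy => IH hm' y hy) (IH hm' x hx)
      rw [h1]
      exact (hderAll m hm x hx).derivWithin (hs x hx)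
  constructor
  · have hcast : ((k : WithTop ℕ∞) - 1) = ((k - 1 : ℕ) : WithTop ℕ∞) := by
      obtain ⟨k', hk'⟩ : ∃ k', k = k' + 1 := ⟨k - 1, by omega⟩
      subst hk'
      simp only [Nat.add_sub_cancel, Nat.cast_add, Nat.cast_one]
      rw [show ((k' : WithTop ℕ∞) + 1) = ((k' + 1 : ℕ∞) : WithTop ℕ∞) by push_cast; rfl]
      rw [show (1 : WithTop ℕ∞) = ((1 : ℕ∞) : WithTop ℕ∞) by rfl]
      rw [← WithTop.coe_sub]
      push_cast
      congr 1
    rw [hcast]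
    refine (contDiffOn_nat_iff_continuousOn_differentiableOn_deriv hs).mpr ⟨?_, ?_⟩
    · intro m hm
      exact (hcont m hm).congr (fun x hx => heq m hm x hx)
    · intro m hm
      intro x hx
      exact ((hderAll m (by omega) x hx).differentiableWithinAt).congr
        (fun y hy => heq m (by omega) y hy) (heq m (by omega) x hx)
  · intro j hj x hx
    rw [heq j hj x hx]
    have hb := hFb j (by omega) x hx
    have hjk : (j:ℝ) + 1 ≤ (k:ℝ) := by exact_mod_cast (by omega : j + 1 ≤ k)
    have he0 : (0:ℝ) ≤ γ - 1 - (j:ℝ) + (k:ℝ) := by linarith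
    have he1 : x ^ (γ - 1 - (j:ℝ) + (k:ℝ)) ≤ (1+h) ^ (γ + (k:ℝ)) := by
      have t1 : x ^ (γ - 1 - (j:ℝ) + (k:ℝ)) ≤ (1+h) ^ (γ - 1 - (j:ℝ) + (k:ℝ)) :=
        Real.rpow_le_rpow hx.1 (by linarith [hx.2]) he0
      have t2 : (1+h) ^ (γ - 1 - (j:ℝ) + (k:ℝ)) ≤ (1+h) ^ (γ + (k:ℝ)) :=
        Real.rpow_le_rpow_of_exponent_le (by linarith)
          (by have : (0:ℝ) ≤ (j:ℝ) := Nat.cast_nonneg j; linarith)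
      linarith
    have hA : AA γ j ≤ S := by
      rw [hS]
      have : AA γ j ≤ ∑ m ∈ Finset.range k, AA γ m :=
        Finset.single_le_sum (fun m _ => AA_nonneg γ m) (Finset.mem_range.mpr (by omega))
      linarith
    calc |F j x| ≤ AA γ j * M * x ^ (γ - 1 - (j:ℝ) + (k:ℝ)) := hb
      _ ≤ AA γ j * M * ((1+h) ^ (γ + (k:ℝ))) := by
          apply mul_le_mul_of_nonneg_left he1 (mul_nonneg (AA_nonneg γ j) hM0)
      _ ≤ S * M * ((1+h) ^ (γ + (k:ℝ))) := by
          apply mul_le_mul_of_nonneg_right (mul_le_mul_of_nonneg_right hA hM0) hP0.le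
      _ = C * M := by rw [hC]; ring
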